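/- arXiv:2505.11798 — 4 statements merged into one kernel-verified Lean document; each statement's English description precedes it below -/
import Mathlib

section
/- Let p > 1, W₀ > 0, γ > 0, c ∈ (0,1), and κ = (p-1)(1-c)γW₀^{p-1} > 0. Suppose W : [0,T) → ℝ is C¹ with W(0) = W₀, W(t) > 0, and W'(t) ≥ γ W₀^{(1-δ)(p-1)} exp(κ t) W(t)^{1+δ(p-1)} for all t ∈ [0,T), where δ ∈ (0,1). Then T < ∞; i.e., W cannot exist (remain finite) for all t ≥ 0. -/
open Real

/-- ODE blow-up: the superlinear differential inequality
`W' ≥ γ W₀^{(1-δ)(p-1)} e^{κt} W^{1+δ(p-1)}` with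
`κ = (p-1)(1-c)γ W₀^{p-1} > 0` cannot have a positive solution on all of `[0,∞)`. -/
theorem stmt1 (p W₀ γ c δ : ℝ) (hp : 1 < p) (hW0 : 0 < W₀) (hγ : 0 < γ)
    (hc : c ∈ Set.Ioo (0:ℝ) 1) (hδ : δ ∈ Set.Ioo (0:ℝ) 1)
    (W W' : ℝ → ℝ)
    (hW : ∀ t ≥ (0:ℝ), HasDerivAt W (W' t) t)
    (hW0' : W 0 = W₀) (hpos : ∀ t ≥ (0:ℝ), 0 < W t)
    (hineq : ∀ t ≥ (0:ℝ),
      γ * W₀ ^ ((1 - δ) * (p - 1)) *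
        Real.exp ((p - 1) * (1 - c) * γ * W₀ ^ (p - 1) * t) *
        W t ^ (1 + δ * (p - 1)) ≤ W' t) :
    False := by
  obtain ⟨hc0, hc1⟩ := hc
  obtain ⟨hδ0, hδ1⟩ := hδ
  set m : ℝ := δ * (p - 1) with hm
  have hm0 : 0 < m := mul_pos hδ0 (by linarith)
  set A : ℝ := γ * W₀ ^ ((1 - δ) * (p - 1)) with hA
  have hA0 : 0 < A := mul_pos hγ (rpow_pos_of_pos hW0 _)
  set k : ℝ := m * A with hk
  have hk0 : 0 < k := mul_pos hm0 hA0
  set g : ℝ → ℝ := fun t => W t ^ (-m) + k * t with hg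
  -- derivative of g
  have hder : ∀ t ≥ (0:ℝ), HasDerivAt g (W' t * (-m) * W t ^ (-m - 1) + k) t := by
    intro t ht
    have h1 : HasDerivAt (fun t => W t ^ (-m)) (W' t * (-m) * W t ^ (-m - 1)) t :=
      (hW t ht).rpow_const (Or.inl (hpos t ht).ne')
    have h2 : HasDerivAt (fun t : ℝ => k * t) k t := by
      simpa using (hasDerivAt_id t).const_mul k
    exact h1.add h2
  -- derivative is nonpositive
  have hneg : ∀ t ≥ (0:ℝ), W' t * (-m) * W t ^ (-m - 1) + k ≤ 0 := by
    intro t ht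
    have hWt := hpos t ht
    have hexp : (1:ℝ) ≤ Real.exp ((p - 1) * (1 - c) * γ * W₀ ^ (p - 1) * t) := by
      rw [Real.one_le_exp_iff]
      have h1 : (0:ℝ) < p - 1 := by linarith
      have h2 : (0:ℝ) < 1 - c := by linarith
      have h3 := rpow_pos_of_pos hW0 (p - 1)
      exact mul_nonneg (le_of_lt (by positivity)) ht
    have hW' : A * W t ^ (1 + m) ≤ W' t := by
      have := hineq t ht
      have h1 : A * W t ^ (1 + m) ≤
          A * Real.exp ((p - 1) * (1 - c) * γ * W₀ ^ (p - 1) * t) * W t ^ (1 + m) := by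
        have hW1 : 0 < W t ^ (1 + m) := rpow_pos_of_pos hWt (1 + m)
        nlinarith [mul_nonneg (sub_nonneg.2 hexp) (mul_pos hA0 hW1).le]
      exact h1.trans this
    have hkey : W t ^ (-m - 1) * W t ^ (1 + m) = 1 := by
      rw [← Real.rpow_add hWt]
      have : -m - 1 + (1 + m) = 0 := by ring
      rw [this, rpow_zero]
    have hpw : 0 < W t ^ (-m - 1) := rpow_pos_of_pos hWt _
    have : m * (W t ^ (-m - 1) * (A * W t ^ (1 + m))) ≤
        m * (W t ^ (-m - 1) * W' t) := by
      apply mul_le_mul_of_nonneg_left _ hm0.le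
      exact mul_le_mul_of_nonneg_left hW' hpw.le
    have heq : m * (W t ^ (-m - 1) * (A * W t ^ (1 + m))) = k := by
      rw [hk]; nlinarith [hkey]
    nlinarith
  -- g is antitone on [0, ∞)
  have hanti : AntitoneOn g (Set.Ici (0:ℝ)) := by
    apply antitoneOn_of_deriv_nonpos (convex_Ici 0)
    · intro t ht
      exact (hder t ht).continuousAt.continuousWithinAt
    · intro t ht
      rw [interior_Ici] at ht
      exact (hder t (Set.mem_Ioi.mp ht).le).differentiableAt.differentiableWithinAt
    · intro t ht
      rw [interior_Ici] at ht
      rw [(hder t (Set.mem_Ioi.mp ht).le).deriv]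
      exact hneg t (Set.mem_Ioi.mp ht).le
  -- contradiction at large time
  set t₀ : ℝ := W₀ ^ (-m) / k + 1 with ht₀
  have ht₀0 : 0 < t₀ := by positivity
  have h1 : g t₀ ≤ g 0 := hanti (Set.self_mem_Ici) (Set.mem_Ici.2 ht₀0.le) ht₀0.le
  have hg0 : g 0 = W₀ ^ (-m) := by simp [hg, hW0']
  have hgt : W₀ ^ (-m) + k < g t₀ := by
    have h2 : 0 < W t₀ ^ (-m) := rpow_pos_of_pos (hpos t₀ ht₀0.le) _
    have : k * t₀ = W₀ ^ (-m) + k := by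
      rw [ht₀]; field_simp
    simp only [hg]
    linarith
  linarith [hg0 ▸ h1, hgt, hk0]
end

section
/- Let p > 1 and W₀ > 0. Suppose W : [0,T) → ℝ is C¹ with W(0) = W₀, W(t) > 0, and W'(t) ≥ (t+1)^{-1} W(t)^p for all t ∈ [0,T). Then T ≤ exp(C·W₀^{-(p-1)}) - 1 for some constant C > 0 depending only on p. -/
open Real

/-- ODE blow-up in the critical case: if `W' ≥ (t+1)^{-1} W^p`, `p > 1`, then
the lifespan satisfies `T ≤ exp(C W₀^{-(p-1)}) - 1` for a constant `C = C(p)`. -/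
theorem stmt3 (p : ℝ) (hp : 1 < p) :
    ∃ C > 0, ∀ (W₀ T : ℝ) (W W' : ℝ → ℝ), 0 < W₀ → 0 < T →
      W 0 = W₀ →
      (∀ t ∈ Set.Ico (0:ℝ) T, HasDerivAt W (W' t) t) →
      (∀ t ∈ Set.Ico (0:ℝ) T, 0 < W t) →
      (∀ t ∈ Set.Ico (0:ℝ) T, (t + 1)⁻¹ * W t ^ p ≤ W' t) →
      T ≤ Real.exp (C * W₀ ^ (-(p - 1))) - 1 := by
  have hp1 : (0:ℝ) < p - 1 := by linarith
  refine ⟨(p-1)⁻¹, by positivity, ?_⟩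
  intro W₀ T W W' hW₀ hT hW0 hderiv hpos hineq
  set B := Real.exp ((p-1)⁻¹ * W₀ ^ (-(p - 1))) - 1 with hBdef
  have hBpos : 0 < B := by
    have h1 : (0:ℝ) < (p-1)⁻¹ * W₀ ^ (-(p - 1)) := by positivity
    have := Real.exp_lt_exp.mpr h1
    simp only [Real.exp_zero] at this
    simpa [hBdef] using this
  -- the key function f
  set f : ℝ → ℝ := fun s => W s ^ (1-p) + (p-1) * Real.log (s+1) with hf
  have hfd : ∀ s ∈ Set.Ico (0:ℝ) T,
      HasDerivAt f (W' s * (1-p) * W s ^ (1-p-1) + (p-1) * (s+1)⁻¹) s := by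
    intro s hs
    have h1 : HasDerivAt (fun u => W u ^ (1-p)) (W' s * (1-p) * W s ^ (1-p-1)) s :=
      (hderiv s hs).rpow_const (Or.inl (ne_of_gt (hpos s hs)))
    have hs1 : s + 1 ≠ 0 := by nlinarith [hs.1]
    have h2 : HasDerivAt (fun u : ℝ => Real.log (u+1)) ((s+1)⁻¹) s := by
      simpa using ((hasDerivAt_id s).add_const 1).log hs1
    exact h1.add (h2.const_mul (p-1))
  have hderiv_nonpos : ∀ s ∈ Set.Ico (0:ℝ) T,
      W' s * (1-p) * W s ^ (1-p-1) + (p-1) * (s+1)⁻¹ ≤ 0 := by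
    intro s hs
    have hWs := hpos s hs
    have hs1 : (0:ℝ) < s + 1 := by nlinarith [hs.1]
    have hkey : (s+1)⁻¹ ≤ W s ^ (1-p-1) * W' s := by
      have h1 : (s + 1)⁻¹ * W s ^ p ≤ W' s := hineq s hs
      have h2 : W s ^ (1-p-1) * ((s + 1)⁻¹ * W s ^ p) ≤ W s ^ (1-p-1) * W' s :=
        mul_le_mul_of_nonneg_left h1 (le_of_lt (Real.rpow_pos_of_pos hWs _))
      calc (s+1)⁻¹ = W s ^ (1-p-1) * ((s + 1)⁻¹ * W s ^ p) := by
            rw [show W s ^ (1-p-1) * ((s + 1)⁻¹ * W s ^ p)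
                = (s+1)⁻¹ * (W s ^ (1-p-1) * W s ^ p) by ring,
              ← Real.rpow_add hWs]
            norm_num
        _ ≤ W s ^ (1-p-1) * W' s := h2
    nlinarith [hkey]
  -- every t in the interval is < B
  have key : ∀ t ∈ Set.Ico (0:ℝ) T, t < B := by
    intro t ht
    rcases eq_or_lt_of_le ht.1 with h0 | h0
    · rw [← h0]; exact hBpos
    have hsub : Set.Icc (0:ℝ) t ⊆ Set.Ico (0:ℝ) T := fun x hx =>
      ⟨hx.1, lt_of_le_of_lt hx.2 ht.2⟩
    have hanti : AntitoneOn f (Set.Icc 0 t) := by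
      apply antitoneOn_of_deriv_nonpos (convex_Icc 0 t)
      · intro x hx
        exact ((hfd x (hsub hx)).continuousAt).continuousWithinAt
      · intro x hx
        rw [interior_Icc] at hx
        have hx' : x ∈ Set.Ico (0:ℝ) T := hsub ⟨le_of_lt hx.1, le_of_lt hx.2⟩
        exact ((hfd x hx').differentiableAt.differentiableWithinAt)
      · intro x hx
        rw [interior_Icc] at hx
        have hx' : x ∈ Set.Ico (0:ℝ) T := hsub ⟨le_of_lt hx.1, le_of_lt hx.2⟩
        rw [(hfd x hx').deriv]
        exact hderiv_nonpos x hx'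
    have hft : f t ≤ f 0 :=
      hanti (Set.left_mem_Icc.mpr (le_of_lt h0)) (Set.right_mem_Icc.mpr (le_of_lt h0))
        (le_of_lt h0)
    have hf0 : f 0 = W₀ ^ (1-p) := by simp [hf, hW0]
    have hWt : 0 < W t ^ (1-p) := Real.rpow_pos_of_pos (hpos t ht) _
    have hlog : (p-1) * Real.log (t+1) < W₀ ^ (1-p) := by
      have : W t ^ (1-p) + (p-1) * Real.log (t+1) ≤ W₀ ^ (1-p) := by
        rw [← hf0]; exact hft
      linarith
    have hlog2 : Real.log (t+1) < (p-1)⁻¹ * W₀ ^ (-(p - 1)) := by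
      rw [show -(p-1) = 1-p by ring]
      rw [lt_inv_mul_iff₀ hp1]
      linarith [hlog]
    have ht1 : (0:ℝ) < t + 1 := by linarith [ht.1]
    have : t + 1 < Real.exp ((p-1)⁻¹ * W₀ ^ (-(p - 1))) := by
      calc t + 1 = Real.exp (Real.log (t+1)) := (Real.exp_log ht1).symm
        _ < _ := Real.exp_lt_exp.mpr hlog2
    rw [hBdef]; linarith
  by_contra hcon
  push_neg at hcon
  exact lt_irrefl B (key B ⟨le_of_lt hBpos, hcon⟩)
end

section
/- Let p > 1, W₀ > 0, γ > 0, and λ > 0. Suppose W : [0,T) → ℝ is C¹ with W(0) = W₀, W(t) > 0, and W'(t) ≥ γ W₀^{(1-δ)(p-1)} exp(λ t) W(t)^{1+δ(p-1)} for all t ∈ [0,T), with fixed δ ∈ (0,1). Then T ≤ C·ln(1 + W₀^{-(p-1)}) for a constant C depending only on p, γ, δ, λ. -/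
open Real

/-- ODE blow-up with exponentially growing coefficient of fixed rate `λ > 0`:
the lifespan satisfies `T ≤ C ln(1 + W₀^{-(p-1)})` with `C = C(p, γ, δ, λ)`. -/
theorem stmt4 (p γ δ lam : ℝ) (hp : 1 < p) (hγ : 0 < γ) (hlam : 0 < lam)
    (hδ : δ ∈ Set.Ioo (0:ℝ) 1) :
    ∃ C > 0, ∀ (W₀ T : ℝ) (W W' : ℝ → ℝ), 0 < W₀ → 0 < T →
      W 0 = W₀ →
      (∀ t ∈ Set.Ico (0:ℝ) T, HasDerivAt W (W' t) t) →
      (∀ t ∈ Set.Ico (0:ℝ) T, 0 < W t) →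
      (∀ t ∈ Set.Ico (0:ℝ) T,
        γ * W₀ ^ ((1 - δ) * (p - 1)) * Real.exp (lam * t) *
          W t ^ (1 + δ * (p - 1)) ≤ W' t) →
      T ≤ C * Real.log (1 + W₀ ^ (-(p - 1))) := by
  obtain ⟨hδ0, hδ1⟩ := hδ
  set σ := δ * (p - 1) with hσdef
  have hσ : 0 < σ := mul_pos hδ0 (by linarith)
  set K := lam / (σ * γ) with hKdef
  have hK : 0 < K := div_pos hlam (mul_pos hσ hγ)
  set M := max K 1 with hMdef
  have hM1 : (1:ℝ) ≤ M := le_max_right _ _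
  have hM0 : 0 < M := lt_of_lt_of_le one_pos hM1
  refine ⟨M / lam, by positivity, ?_⟩
  intro W₀ T W W' hW₀ hT hW0 hderiv hWpos hineq
  set A := W₀ ^ ((1 - δ) * (p - 1)) with hAdef
  have hA : 0 < A := rpow_pos_of_pos hW₀ _
  set x := W₀ ^ (-(p - 1)) with hxdef
  have hx : 0 < x := rpow_pos_of_pos hW₀ _
  set g : ℝ → ℝ := fun s => lam * (W s) ^ (-σ) + σ * γ * A * (Real.exp (lam * s) - 1)
    with hgdef
  have hgderiv : ∀ s ∈ Set.Ico (0:ℝ) T, HasDerivAt g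
      (lam * (W' s * (-σ) * (W s) ^ (-σ - 1)) + σ * γ * A * (Real.exp (lam * s) * lam)) s := by
    intro s hs
    have h1 : HasDerivAt (fun y => (W y) ^ (-σ)) (W' s * (-σ) * (W s) ^ (-σ - 1)) s :=
      (hderiv s hs).rpow_const (Or.inl (ne_of_gt (hWpos s hs)))
    have h2 : HasDerivAt (fun y => Real.exp (lam * y) - 1) (Real.exp (lam * s) * lam) s := by
      have := (((hasDerivAt_id s).const_mul lam).exp).sub_const 1
      simpa using this
    exact (h1.const_mul lam).add (h2.const_mul (σ * γ * A))
  have hxa : W₀ ^ (-σ) = x * A := by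
    rw [hxdef, hAdef, ← Real.rpow_add hW₀, hσdef,
      show -(p - 1) + (1 - δ) * (p - 1) = -(δ * (p - 1)) from by ring]
  -- key estimate
  have key : ∀ t ∈ Set.Ico (0:ℝ) T, Real.exp (lam * t) < 1 + K * x := by
    intro t ht
    rcases eq_or_lt_of_le ht.1 with h0 | h0
    · rw [← h0]
      simp only [mul_zero, Real.exp_zero]
      nlinarith
    · have hsub : Set.Icc (0:ℝ) t ⊆ Set.Ico 0 T := fun y hy => ⟨hy.1, lt_of_le_of_lt hy.2 ht.2⟩
      have hcont : ContinuousOn g (Set.Icc 0 t) := fun y hy =>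
        ((hgderiv y (hsub hy)).continuousAt).continuousWithinAt
      have hmem : ∀ y ∈ interior (Set.Icc (0:ℝ) t), y ∈ Set.Ico (0:ℝ) T := by
        intro y hy
        rw [interior_Icc] at hy
        exact hsub ⟨hy.1.le, hy.2.le⟩
      have hdiff : DifferentiableOn ℝ g (interior (Set.Icc (0:ℝ) t)) := fun y hy =>
        ((hgderiv y (hmem y hy)).differentiableAt).differentiableWithinAt
      have hnonpos : ∀ y ∈ interior (Set.Icc (0:ℝ) t), deriv g y ≤ 0 := by
        intro y hy
        have hy' := hmem y hy
        rw [(hgderiv y hy').deriv]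
        have hWy := hWpos y hy'
        have hpow : (W y) ^ (-σ - 1) * (W y) ^ (1 + σ) = 1 := by
          rw [← Real.rpow_add hWy, show -σ - 1 + (1 + σ) = 0 from by ring, Real.rpow_zero]
        have h3 := mul_le_mul_of_nonneg_left (hineq y hy')
          (le_of_lt (mul_pos hσ (rpow_pos_of_pos hWy (-σ - 1))))
        have h4 : σ * (W y) ^ (-σ - 1) * (γ * A * Real.exp (lam * y) * (W y) ^ (1 + σ))
            = σ * γ * A * Real.exp (lam * y) := by
          linear_combination (σ * γ * A * Real.exp (lam * y)) * hpow
        have h5 : σ * γ * A * Real.exp (lam * y) ≤ σ * (W y) ^ (-σ - 1) * W' y := by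
          rw [← h4]; linarith [h3]
        nlinarith [mul_le_mul_of_nonneg_left h5 hlam.le]
      have hanti := antitoneOn_of_deriv_nonpos (convex_Icc 0 t) hcont hdiff hnonpos
      have hle := hanti (Set.left_mem_Icc.2 h0.le) (Set.right_mem_Icc.2 h0.le) h0.le
      have hg0 : g 0 = lam * W₀ ^ (-σ) := by
        simp [hgdef, hW0]
      have hgt : g t = lam * (W t) ^ (-σ) + σ * γ * A * (Real.exp (lam * t) - 1) := rfl
      have hWt : 0 < lam * (W t) ^ (-σ) :=
        mul_pos hlam (rpow_pos_of_pos (hWpos t ht) _)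
      have h6 : σ * γ * A * (Real.exp (lam * t) - 1) < lam * (x * A) := by
        rw [← hxa]
        rw [hg0, hgt] at hle
        linarith
      -- cancel A
      have h7 : σ * γ * (Real.exp (lam * t) - 1) < lam * x :=
        lt_of_mul_lt_mul_right (by nlinarith : σ * γ * (Real.exp (lam * t) - 1) * A < lam * x * A) hA.le
      have h8 : Real.exp (lam * t) - 1 < K * x := by
        rw [hKdef, div_mul_eq_mul_div, lt_div_iff₀ (mul_pos hσ hγ)]
        nlinarith
      linarith
  -- conclude
  set L := Real.log (1 + K * x) with hLdef
  have hL : 0 < L := Real.log_pos (by nlinarith)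
  have hTle : T ≤ L / lam := by
    by_contra h
    push_neg at h
    have h0 : (0:ℝ) ≤ L / lam := by positivity
    have hk := key (L / lam) ⟨h0, h⟩
    rw [mul_div_cancel₀ L (ne_of_gt hlam)] at hk
    have : Real.exp L = 1 + K * x := Real.exp_log (by nlinarith)
    linarith
  have hbern : 1 + M * x ≤ (1 + x) ^ M :=
    one_add_mul_self_le_rpow_one_add (by linarith) hM1
  have hKM : K * x ≤ M * x := mul_le_mul_of_nonneg_right (le_max_left _ _) hx.le
  have hlog : L ≤ M * Real.log (1 + x) := by
    calc L ≤ Real.log ((1 + x) ^ M) := by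
          apply Real.log_le_log (by nlinarith)
          linarith
      _ = M * Real.log (1 + x) := Real.log_rpow (by linarith) M
  calc T ≤ L / lam := hTle
    _ ≤ (M * Real.log (1 + x)) / lam := by
        gcongr
    _ = M / lam * Real.log (1 + x) := by ring
end

section
/- Let α > 0 and a(t) = (t+1)^{α}. Set A(t) = ∫₀ᵗ a(s) ds = ((t+1)^{α+1} − 1)/(α+1) and fix R > 0, n ≥ 1, p > 1. If W : [0,T) → ℝ is C¹ with W(0) = εc₀ (c₀ > 0), W > 0, and W'(t) ≥ (A(t)+R)^{-n(p-1)} W(t)^p on [0,T), and if n(p-1)(α+1) < 1, then T ≤ C ε^{-(p-1)/(1 − n(p-1)(α+1))} for small ε > 0, with C independent of ε. -/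
open Real

/-- Auxiliary ODE comparison lemma: if `W' ≥ B W^p` with `B t ≥ c (t+1)^{θ-1}`,
then `(p-1)(c/θ)((t+1)^θ - 1) ≤ W(0)^{1-p}` on `[0,T)`. -/
lemma stmt15_aux (T p c θ : ℝ) (W W' B : ℝ → ℝ)
    (hp : 1 < p) (hθ : 0 < θ) (hT : 0 < T)
    (hW : ∀ t ∈ Set.Ico (0:ℝ) T, HasDerivAt W (W' t) t)
    (hWpos : ∀ t ∈ Set.Ico (0:ℝ) T, 0 < W t)
    (hode : ∀ t ∈ Set.Ico (0:ℝ) T, B t * W t ^ p ≤ W' t)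
    (hB : ∀ t ∈ Set.Ico (0:ℝ) T, c * (t + 1) ^ (θ - 1) ≤ B t) :
    ∀ t ∈ Set.Ico (0:ℝ) T,
      (p - 1) * (c / θ) * ((t + 1) ^ θ - 1) ≤ W 0 ^ (1 - p) := by
  intro t ht
  set φ : ℝ → ℝ := fun s => W s ^ (1 - p) + (p - 1) * (c / θ) * ((s + 1) ^ θ - 1)
    with hφ_def
  set φ' : ℝ → ℝ := fun s =>
    W' s * (1 - p) * W s ^ (1 - p - 1) + (p - 1) * (c / θ) * (1 * θ * (s + 1) ^ (θ - 1))
    with hφ'_def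
  have hder : ∀ s ∈ Set.Ico (0 : ℝ) T, HasDerivAt φ (φ' s) s := by
    intro s hs
    have h1 : HasDerivAt (fun u : ℝ => W u ^ (1 - p))
        (W' s * (1 - p) * W s ^ (1 - p - 1)) s :=
      (hW s hs).rpow_const (Or.inl (hWpos s hs).ne')
    have h2 : HasDerivAt (fun u : ℝ => (u + 1) ^ θ) (1 * θ * (s + 1) ^ (θ - 1)) s := by
      have := ((hasDerivAt_id s).add_const 1).rpow_const
        (p := θ) (Or.inl (by have := hs.1; intro h; nlinarith : s + 1 ≠ 0))
      simpa using this
    have h3 : HasDerivAt (fun u : ℝ => (p - 1) * (c / θ) * ((u + 1) ^ θ - 1))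
        ((p - 1) * (c / θ) * (1 * θ * (s + 1) ^ (θ - 1))) s :=
      ((h2.sub_const 1).const_mul _)
    exact h1.add h3
  have hderiv_nonpos : ∀ x ∈ interior (Set.Ico (0 : ℝ) T), deriv φ x ≤ 0 := by
    intro x hx
    rw [interior_Ico] at hx
    have hxI : x ∈ Set.Ico (0 : ℝ) T := ⟨hx.1.le, hx.2⟩
    rw [(hder x hxI).deriv]
    have hWx : 0 < W x := hWpos x hxI
    have hWp : W x ^ (1 - p - 1) * (W x ^ p) = 1 := by
      rw [← rpow_add hWx]; norm_num
    have hode' : B x ≤ W x ^ (1 - p - 1) * W' x :=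
      calc B x = W x ^ (1 - p - 1) * (B x * W x ^ p) := by
            rw [show W x ^ (1 - p - 1) * (B x * W x ^ p)
                = B x * (W x ^ (1 - p - 1) * W x ^ p) by ring, hWp, mul_one]
        _ ≤ W x ^ (1 - p - 1) * W' x :=
            mul_le_mul_of_nonneg_left (hode x hxI) (rpow_pos_of_pos hWx _).le
    have hmain : c * (x + 1) ^ (θ - 1) ≤ W x ^ (1 - p - 1) * W' x :=
      le_trans (hB x hxI) hode'
    have hcθ : (p - 1) * (c / θ) * (1 * θ * (x + 1) ^ (θ - 1))
        = (p - 1) * (c * (x + 1) ^ (θ - 1)) := by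
      field_simp
    simp only [hφ'_def]
    rw [hcθ]
    have := mul_le_mul_of_nonneg_left hmain (by linarith : (0:ℝ) ≤ p - 1)
    nlinarith
  have hanti : AntitoneOn φ (Set.Ico (0 : ℝ) T) := by
    apply antitoneOn_of_deriv_nonpos (convex_Ico 0 T)
    · exact fun x hx => (hder x hx).continuousAt.continuousWithinAt
    · intro x hx
      rw [interior_Ico] at hx
      exact (hder x ⟨hx.1.le, hx.2⟩).differentiableAt.differentiableWithinAt
    · exact hderiv_nonpos
  have h0mem : (0 : ℝ) ∈ Set.Ico (0 : ℝ) T := ⟨le_refl _, hT⟩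
  have hφle : φ t ≤ φ 0 := hanti h0mem ht ht.1
  have hφ0 : φ 0 = W 0 ^ (1 - p) := by
    simp [hφ_def]
  have hWt : 0 < W t ^ (1 - p) := rpow_pos_of_pos (hWpos t ht) _
  rw [hφ0] at hφle
  simp only [hφ_def] at hφle
  linarith

/-- Lifespan upper bound in the generalized Tricomi case `a(t) = (t+1)^α`:
if `W' ≥ (A(t)+R)^{-n(p-1)} W^p` with `A(t) = ((t+1)^{α+1}-1)/(α+1)`,
`W(0) = εc₀` and `n(p-1)(α+1) < 1`, then
`T ≤ C ε^{-(p-1)/(1-n(p-1)(α+1))}` for small `ε`. -/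
theorem stmt15 (α R p c₀ : ℝ) (n : ℕ) (hα : 0 < α) (hR : 0 < R) (hn : 1 ≤ n)
    (hp : 1 < p) (hc₀ : 0 < c₀) (hcrit : (n : ℝ) * (p - 1) * (α + 1) < 1) :
    ∃ C > (0:ℝ), ∃ ε₀ > (0:ℝ), ∀ ε : ℝ, 0 < ε → ε ≤ ε₀ →
      ∀ (T : ℝ) (W W' : ℝ → ℝ), 0 < T →
        W 0 = ε * c₀ →
        (∀ t ∈ Set.Ico (0:ℝ) T, HasDerivAt W (W' t) t) →
        (∀ t ∈ Set.Ico (0:ℝ) T, 0 < W t) →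
        (∀ t ∈ Set.Ico (0:ℝ) T,
          (((t + 1) ^ (α + 1) - 1) / (α + 1) + R) ^ (-((n : ℝ) * (p - 1)))
            * W t ^ p ≤ W' t) →
        T ≤ C * ε ^ (-(p - 1) / (1 - (n : ℝ) * (p - 1) * (α + 1))) := by
  obtain ⟨k, hkd⟩ : ∃ k : ℝ, k = (n : ℝ) * (p - 1) := ⟨_, rfl⟩
  have hn1 : (1 : ℝ) ≤ (n : ℝ) := by exact_mod_cast hn
  have hk : 0 < k := by rw [hkd]; exact mul_pos (by linarith) (by linarith)
  obtain ⟨θ, hθd⟩ : ∃ θ : ℝ, θ = 1 - k * (α + 1) := ⟨_, rfl⟩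
  have hθ : 0 < θ := by rw [hθd, hkd]; linarith
  have hθk : θ - 1 = (α + 1) * (-k) := by rw [hθd]; ring
  obtain ⟨M, hMd⟩ : ∃ M : ℝ, M = 1 / (α + 1) + R := ⟨_, rfl⟩
  have hM : 0 < M := by rw [hMd]; positivity
  obtain ⟨c, hcd⟩ : ∃ c : ℝ, c = M ^ (-k) := ⟨_, rfl⟩
  have hc : 0 < c := by rw [hcd]; exact rpow_pos_of_pos hM _
  obtain ⟨D, hDd⟩ : ∃ D : ℝ, D = c₀ ^ (1 - p) * θ / ((p - 1) * c) := ⟨_, rfl⟩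
  have hD : 0 < D := by
    rw [hDd]
    exact div_pos (mul_pos (rpow_pos_of_pos hc₀ _) hθ) (mul_pos (by linarith) hc)
  refine ⟨(2 * D) ^ (1 / θ), rpow_pos_of_pos (by linarith) _,
    min 1 (D ^ (1 / (p - 1))), lt_min one_pos (rpow_pos_of_pos hD _), ?_⟩
  intro ε hε hε₀ T W W' hT hW0 hW hWpos hode
  rw [show 1 - (n : ℝ) * (p - 1) * (α + 1) = θ by rw [hθd, hkd]]
  simp only [← hkd] at hode
  -- lower bound for the coefficient B t
  have hB : ∀ t ∈ Set.Ico (0:ℝ) T,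
      c * (t + 1) ^ (θ - 1)
        ≤ (((t + 1) ^ (α + 1) - 1) / (α + 1) + R) ^ (-k) := by
    intro t ht
    have ht0 : (0:ℝ) ≤ t := ht.1
    have ht1 : (0:ℝ) ≤ t + 1 := by linarith
    have hu1 : (1 : ℝ) ≤ (t + 1) ^ (α + 1) := one_le_rpow (by linarith) (by linarith)
    have hA0 : 0 ≤ ((t + 1) ^ (α + 1) - 1) / (α + 1) :=
      div_nonneg (by linarith) (by linarith)
    have hAR : 0 < ((t + 1) ^ (α + 1) - 1) / (α + 1) + R := by linarith
    have hAle : ((t + 1) ^ (α + 1) - 1) / (α + 1) + R ≤ M * (t + 1) ^ (α + 1) := by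
      rw [hMd]
      have e1 : (1 / (α + 1) + R) * (t + 1) ^ (α + 1)
          = (t + 1) ^ (α + 1) / (α + 1) + R * (t + 1) ^ (α + 1) := by ring
      rw [e1]
      have h1 : ((t + 1) ^ (α + 1) - 1) / (α + 1) ≤ (t + 1) ^ (α + 1) / (α + 1) :=
        (div_le_div_iff_of_pos_right (by linarith)).mpr (by linarith)
      have h2 : R ≤ R * (t + 1) ^ (α + 1) := le_mul_of_one_le_right hR.le hu1
      linarith
    have hstep : (M * (t + 1) ^ (α + 1)) ^ (-k)
        ≤ (((t + 1) ^ (α + 1) - 1) / (α + 1) + R) ^ (-k) :=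
      rpow_le_rpow_of_nonpos hAR hAle (by linarith)
    have hMu : (M * (t + 1) ^ (α + 1)) ^ (-k) = c * (t + 1) ^ (θ - 1) := by
      rw [mul_rpow hM.le (rpow_nonneg ht1 _), ← rpow_mul ht1, hcd, ← hθk]
    rw [← hMu]
    exact hstep
  have hkey := stmt15_aux T p c θ W W'
    (fun t => (((t + 1) ^ (α + 1) - 1) / (α + 1) + R) ^ (-k))
    hp hθ hT hW hWpos hode hB
  -- convert the key estimate into a bound on t
  have hεp : 0 < ε ^ (p - 1) := rpow_pos_of_pos hε _
  have hεD : ε ^ (p - 1) ≤ D := by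
    have h8 : ε ≤ D ^ (1 / (p - 1)) := le_trans hε₀ (min_le_right _ _)
    calc ε ^ (p - 1) ≤ (D ^ (1 / (p - 1))) ^ (p - 1) :=
          rpow_le_rpow hε.le h8 (by linarith)
      _ = D := by
          rw [← rpow_mul hD.le, one_div_mul_cancel (by linarith : p - 1 ≠ 0), rpow_one]
  have hone : 1 ≤ D * ε ^ (1 - p) := by
    have h : ε ^ (1 - p) = (ε ^ (p - 1))⁻¹ := by
      rw [show (1:ℝ) - p = -(p - 1) by ring, rpow_neg hε.le]
    rw [h, ← div_eq_mul_inv, le_div_iff₀ hεp, one_mul]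
    exact hεD
  have hqD : (p - 1) * (c / θ) * D = c₀ ^ (1 - p) := by
    have hθ0 : θ ≠ 0 := hθ.ne'
    have hc0 : c ≠ 0 := hc.ne'
    have hp0 : p - 1 ≠ 0 := sub_ne_zero.mpr (by linarith)
    rw [hDd]
    field_simp
  have hq : 0 < (p - 1) * (c / θ) := mul_pos (by linarith) (div_pos hc hθ)
  have key : ∀ t ∈ Set.Ico (0:ℝ) T,
      t + 1 ≤ (2 * D) ^ (1 / θ) * ε ^ (-(p - 1) / θ) := by
    intro t ht
    have h5 : (p - 1) * (c / θ) * ((t + 1) ^ θ - 1) ≤ ε ^ (1 - p) * c₀ ^ (1 - p) := by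
      have := hkey t ht
      rw [hW0, mul_rpow hε.le hc₀.le] at this
      exact this
    have h6 : (t + 1) ^ θ - 1 ≤ D * ε ^ (1 - p) := by
      have h7 : (p - 1) * (c / θ) * ((t + 1) ^ θ - 1)
          ≤ (p - 1) * (c / θ) * (D * ε ^ (1 - p)) := by
        calc (p - 1) * (c / θ) * ((t + 1) ^ θ - 1) ≤ ε ^ (1 - p) * c₀ ^ (1 - p) := h5
          _ = (p - 1) * (c / θ) * (D * ε ^ (1 - p)) := by rw [← hqD]; ring
      exact le_of_mul_le_mul_left h7 hq
    have h9 : (t + 1) ^ θ ≤ 2 * D * ε ^ (1 - p) := by nlinarith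
    have ht1 : (0 : ℝ) ≤ t + 1 := by have := ht.1; linarith
    have h10 : ((t + 1) ^ θ) ^ (1 / θ) ≤ (2 * D * ε ^ (1 - p)) ^ (1 / θ) :=
      rpow_le_rpow (rpow_nonneg ht1 _) h9 (by positivity)
    have h11 : ((t + 1) ^ θ) ^ (1 / θ) = t + 1 := by
      rw [← rpow_mul ht1, mul_one_div_cancel hθ.ne', rpow_one]
    have h12 : (2 * D * ε ^ (1 - p)) ^ (1 / θ)
        = (2 * D) ^ (1 / θ) * ε ^ (-(p - 1) / θ) := by
      rw [mul_rpow (by positivity) (rpow_nonneg hε.le _), ← rpow_mul hε.le]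
      congr 1
      ring
    rw [h11, h12] at h10
    exact h10
  by_contra hcon
  push_neg at hcon
  have hL0 : 0 < (2 * D) ^ (1 / θ) * ε ^ (-(p - 1) / θ) :=
    mul_pos (rpow_pos_of_pos (by linarith) _) (rpow_pos_of_pos hε _)
  have := key ((2 * D) ^ (1 / θ) * ε ^ (-(p - 1) / θ)) ⟨hL0.le, hcon⟩
  linarith
end
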